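/- (Lemma 2.2, link part.) Assume every color class col⁻¹(i) has at least two elements. Let σ ∈ B_r be a nonempty face such that for every color i ∈ {1,…,r} there is a vertex of color i not belonging to σ. Then the reduced simplicial homology of the link satisfies H̃_j(link_σ(B_r); k) = 0 for every integer j with −1 ≤ j < r − |σ| (in particular for all j below the dimension r − 1 − dim σ of link_σ(B_r)). -/

import Mathlib

/-- `BrFaces col` is the simplicial complex `B_r` of all irrelevant faces of dimension at
most `r`, i.e. faces with at most `r + 1` vertices not using all `r` colors. -/
def BrFaces {V : Type*} [DecidableEq V] {r : ℕ} (col : V → Fin r) (s : Finset V) : Prop :=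
  s.card ≤ r + 1 ∧ s.image col ≠ Finset.univ

/-- The link of a face `σ` in a simplicial complex `Δ` (given as a predicate on finite
sets of vertices): the faces `γ ∈ Δ` with `γ ∪ σ ∈ Δ` and `γ ∩ σ = ∅`. -/
def linkFaces {V : Type*} [DecidableEq V] (Δ : Finset V → Prop) (σ : Finset V)
    (γ : Finset V) : Prop :=
  Δ γ ∧ Δ (γ ∪ σ) ∧ γ ∩ σ = ∅

/-- The degree-`m` term of the augmented simplicial chain complex of `Δ` with
coefficients in `k`: the free `k`-vector space on the (finitely many) faces of `Δ` with
`m` vertices, realized as functions on these faces.  Chain degree `m` corresponds to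
reduced homological degree `m - 1`, so the empty face sits in chain degree `0`. -/
abbrev simplicialChains (k : Type*) [Field k] {V : Type*} (Δ : Finset V → Prop)
    (m : ℕ) : Type _ :=
  {s : Finset V // Δ s ∧ s.card = m} → k

open scoped Classical in
/-- The simplicial boundary map of the augmented chain complex of `Δ`, from chain degree
`m + 1` to chain degree `m`, given on a face `s` by the alternating sum (relative to the
linear order on the vertices) of the faces obtained by deleting one vertex of `s`. -/
noncomputable def simplicialBoundary (k : Type*) [Field k] {V : Type*} [Fintype V]
    [LinearOrder V] (Δ : Finset V → Prop) (m : ℕ) :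
    simplicialChains k Δ (m + 1) →ₗ[k] simplicialChains k Δ m :=
  LinearMap.lsum k (fun _ => k) k fun s =>
    LinearMap.toSpanSingleton k (simplicialChains k Δ m)
      (∑ v ∈ s.1.attach,
        if h : Δ (s.1.erase v.1) then
          ((-1 : k) ^ (s.1.filter (· < v.1)).card) •
            Pi.single (M := fun _ => k)
              (⟨s.1.erase v.1, ⟨h, by simp [Finset.card_erase_of_mem v.2, s.2.2]⟩⟩ :
                {s : Finset V // Δ s ∧ s.card = m}) (1 : k)
        else 0)

section Aux

open scoped Classical
set_option linter.unusedSectionVars false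

variable {V : Type*} [Fintype V] [LinearOrder V] (k : Type*) [Field k] (Δ : Finset V → Prop)

/-- basis-like vector indexed by an arbitrary finset -/
noncomputable def Ech (m : ℕ) (t : Finset V) : simplicialChains k Δ m :=
  fun u => if u.1 = t then 1 else 0

/-- sign -/
noncomputable def sgnk (t : Finset V) (v : V) : k := (-1) ^ (t.filter (· < v)).card

lemma Ech_single {m : ℕ} (u : {s : Finset V // Δ s ∧ s.card = m}) :
    (Pi.single u (1 : k) : simplicialChains k Δ m) = Ech k Δ m u.1 := by
  funext u'
  rw [Pi.single_apply, Ech]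
  simp [Subtype.ext_iff]

lemma single_eq_smul {m : ℕ} (u : {s : Finset V // Δ s ∧ s.card = m}) (c : k) :
    (Pi.single u c : simplicialChains k Δ m)
      = c • (Pi.single u (1 : k) : simplicialChains k Δ m) := by
  funext u'
  rw [Pi.single_apply, Pi.smul_apply, Pi.single_apply]
  split <;> simp

lemma chains_decomp {m : ℕ} (x : simplicialChains k Δ m) :
    x = ∑ u, x u • (Pi.single u (1 : k) : simplicialChains k Δ m) := by
  conv_lhs => rw [← Finset.univ_sum_single x]
  exact Finset.sum_congr rfl fun u _ => single_eq_smul k Δ u (x u)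

lemma bd_E (hdown : ∀ ⦃a b : Finset V⦄, a ⊆ b → Δ b → Δ a) (m : ℕ)
    (t : Finset V) (ht : Δ t) (hc : t.card = m + 1) :
    simplicialBoundary k Δ m (Ech k Δ (m + 1) t) =
      ∑ v ∈ t, sgnk k t v • Ech k Δ m (t.erase v) := by
  have h1 : Ech k Δ (m + 1) t
      = Pi.single (⟨t, ht, hc⟩ : {s : Finset V // Δ s ∧ s.card = m + 1}) (1 : k) :=
    (Ech_single k Δ (⟨t, ht, hc⟩ : {s : Finset V // Δ s ∧ s.card = m + 1})).symm
  rw [h1, simplicialBoundary, LinearMap.lsum_apply, LinearMap.sum_apply]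
  simp only [LinearMap.comp_apply, LinearMap.proj_apply, LinearMap.toSpanSingleton_apply]
  rw [Finset.sum_eq_single (⟨t, ht, hc⟩ : {s : Finset V // Δ s ∧ s.card = m + 1})]
  · rw [Pi.single_eq_same, one_smul]
    rw [← Finset.sum_attach t (fun v => sgnk k t v • Ech k Δ m (t.erase v))]
    refine Finset.sum_congr rfl fun v _ => ?_
    have hΔ : Δ (t.erase v.1) := hdown (Finset.erase_subset _ _) ht
    rw [dif_pos hΔ, Ech_single]
    rfl
  · intro b _ hb
    rw [Pi.single_eq_of_ne hb, zero_smul]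
  · simp


variable {Δ}

lemma sgnk_erase_of_not_lt {t : Finset V} {u v : V} (h : ¬ v < u) :
    sgnk k (t.erase v) u = sgnk k t u := by
  rw [sgnk, sgnk, Finset.filter_erase, Finset.erase_eq_of_notMem]
  simp [h]

lemma sgnk_erase_of_lt {t : Finset V} {u v : V} (hv : v ∈ t) (h : v < u) :
    sgnk k (t.erase v) u = - sgnk k t u := by
  have hm : v ∈ t.filter (· < u) := Finset.mem_filter.2 ⟨hv, h⟩
  rw [sgnk, sgnk, Finset.filter_erase, ← Finset.card_erase_add_one hm, pow_succ]
  ring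

lemma sgnk_insert_of_not_lt {t : Finset V} {w v : V} (h : ¬ w < v) :
    sgnk k (insert w t) v = sgnk k t v := by
  rw [sgnk, sgnk, Finset.filter_insert, if_neg h]

lemma sgnk_insert_of_lt {t : Finset V} {w v : V} (hw : w ∉ t) (h : w < v) :
    sgnk k (insert w t) v = - sgnk k t v := by
  have hm : w ∉ t.filter (· < v) := fun hc => hw (Finset.mem_filter.1 hc).1
  rw [sgnk, sgnk, Finset.filter_insert, if_pos h, Finset.card_insert_of_notMem hm, pow_succ]
  ring

lemma sgnk_mul_self {t : Finset V} {v : V} : sgnk k t v * sgnk k t v = 1 := by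
  rw [sgnk, ← pow_add]
  exact Even.neg_one_pow ⟨_, rfl⟩

variable (Δ)

noncomputable def hmap (w : V) (m : ℕ) :
    simplicialChains k Δ m →ₗ[k] simplicialChains k Δ (m + 1) :=
  LinearMap.lsum k (fun _ => k) k fun s =>
    LinearMap.toSpanSingleton k (simplicialChains k Δ (m + 1))
      (if w ∈ s.1 then 0 else sgnk k s.1 w • Ech k Δ (m + 1) (insert w s.1))

lemma hmap_E (w : V) (m : ℕ) (t : Finset V) (ht : Δ t) (hc : t.card = m) :
    hmap k Δ w m (Ech k Δ m t)
      = if w ∈ t then 0 else sgnk k t w • Ech k Δ (m + 1) (insert w t) := by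
  have h1 : Ech k Δ m t
      = Pi.single (⟨t, ht, hc⟩ : {s : Finset V // Δ s ∧ s.card = m}) (1 : k) :=
    (Ech_single k Δ (⟨t, ht, hc⟩ : {s : Finset V // Δ s ∧ s.card = m})).symm
  rw [h1, hmap, LinearMap.lsum_apply, LinearMap.sum_apply]
  simp only [LinearMap.comp_apply, LinearMap.proj_apply, LinearMap.toSpanSingleton_apply]
  rw [Finset.sum_eq_single (⟨t, ht, hc⟩ : {s : Finset V // Δ s ∧ s.card = m})]
  · rw [Pi.single_eq_same, one_smul]
  · intro b _ hb
    rw [Pi.single_eq_of_ne hb, zero_smul]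
  · simp


lemma bd_bd (hdown : ∀ ⦃a b : Finset V⦄, a ⊆ b → Δ b → Δ a) (m : ℕ)
    (t : Finset V) (ht : Δ t) (hc : t.card = m + 2) :
    simplicialBoundary k Δ m (simplicialBoundary k Δ (m + 1) (Ech k Δ (m + 2) t)) = 0 := by
  rw [bd_E k Δ hdown (m + 1) t ht hc, map_sum]
  have step : ∀ v ∈ t, simplicialBoundary k Δ m (sgnk k t v • Ech k Δ (m + 1) (t.erase v))
      = ∑ u ∈ t.erase v, sgnk k t v •
          (sgnk k (t.erase v) u • Ech k Δ m ((t.erase v).erase u)) := by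
    intro v hv
    rw [map_smul, bd_E k Δ hdown m _ (hdown (Finset.erase_subset _ _) ht)
      (by rw [Finset.card_erase_of_mem hv, hc]; omega), Finset.smul_sum]
  rw [Finset.sum_congr rfl step, Finset.sum_sigma']
  apply Finset.sum_involution (fun p _ => ⟨p.2, p.1⟩)
  · rintro ⟨v, u⟩ hp
    rw [Finset.mem_sigma] at hp
    obtain ⟨hv, hu'⟩ := hp
    have hu : u ∈ t := Finset.mem_of_mem_erase hu'
    have hne : u ≠ v := Finset.ne_of_mem_erase hu'
    dsimp only
    have hset : (t.erase u).erase v = (t.erase v).erase u := by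
      ext a; simp only [Finset.mem_erase]; tauto
    have hE : Ech k Δ m ((t.erase u).erase v) = Ech k Δ m ((t.erase v).erase u) := by
      rw [hset]
    rw [hE, smul_smul, smul_smul, ← add_smul]
    have hsgn : sgnk k t v * sgnk k (t.erase v) u + sgnk k t u * sgnk k (t.erase u) v = 0 := by
      rcases hne.lt_or_gt with h | h
      · rw [sgnk_erase_of_not_lt k h.asymm, sgnk_erase_of_lt k hu h]; ring
      · rw [sgnk_erase_of_lt k hv h, sgnk_erase_of_not_lt k h.asymm]; ring
    rw [hsgn, zero_smul]
  · rintro ⟨v, u⟩ hp _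
    rw [Finset.mem_sigma] at hp
    intro hEq
    exact Finset.ne_of_mem_erase hp.2 (congrArg Sigma.fst hEq)
  · rintro ⟨v, u⟩ hp
    rfl
  · rintro ⟨v, u⟩ hp
    rw [Finset.mem_sigma] at hp ⊢
    exact ⟨Finset.mem_of_mem_erase hp.2,
      Finset.mem_erase.2 ⟨(Finset.ne_of_mem_erase hp.2).symm, hp.1⟩⟩


lemma homotopy_E (hdown : ∀ ⦃a b : Finset V⦄, a ⊆ b → Δ b → Δ a) (w : V) (m : ℕ)
    (t : Finset V) (ht : Δ t) (hc : t.card = m + 1)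
    (hcone : ∀ s ⊆ t, Δ s → Δ (insert w s)) :
    simplicialBoundary k Δ (m + 1) (hmap k Δ w (m + 1) (Ech k Δ (m + 1) t))
      + hmap k Δ w m (simplicialBoundary k Δ m (Ech k Δ (m + 1) t)) = Ech k Δ (m + 1) t := by
  have hterase : ∀ v ∈ t, Δ (t.erase v) ∧ (t.erase v).card = m := fun v hv =>
    ⟨hdown (Finset.erase_subset _ _) ht, by rw [Finset.card_erase_of_mem hv, hc]; omega⟩
  rw [bd_E k Δ hdown m t ht hc, map_sum]
  have h2 : ∀ v ∈ t, hmap k Δ w m (sgnk k t v • Ech k Δ m (t.erase v))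
      = sgnk k t v • (if w ∈ t.erase v then (0 : simplicialChains k Δ (m + 1))
          else sgnk k (t.erase v) w • Ech k Δ (m + 1) (insert w (t.erase v))) := by
    intro v hv
    rw [map_smul, hmap_E k Δ w m _ (hterase v hv).1 (hterase v hv).2]
  rw [Finset.sum_congr rfl h2, hmap_E k Δ w (m + 1) t ht hc]
  by_cases hw : w ∈ t
  · rw [if_pos hw, map_zero, zero_add]
    rw [Finset.sum_eq_single_of_mem w hw]
    · rw [if_neg (Finset.notMem_erase w t), Finset.insert_erase hw, smul_smul,
        sgnk_erase_of_not_lt k (lt_irrefl w), sgnk_mul_self k, one_smul]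
    · intro v hv hne
      rw [if_pos (Finset.mem_erase.2 ⟨Ne.symm hne, hw⟩), smul_zero]
  · rw [if_neg hw, map_smul]
    have hΔins : Δ (insert w t) := hcone t Finset.Subset.rfl ht
    have hcins : (insert w t).card = (m + 1) + 1 := by
      rw [Finset.card_insert_of_notMem hw, hc]
    rw [bd_E k Δ hdown (m + 1) (insert w t) hΔins hcins, Finset.sum_insert hw,
      Finset.erase_insert hw, smul_add, smul_smul, sgnk_insert_of_not_lt k (lt_irrefl w),
      sgnk_mul_self k, one_smul, Finset.smul_sum]
    have key : ∀ v ∈ t,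
        sgnk k t w • (sgnk k (insert w t) v • Ech k Δ (m + 1) ((insert w t).erase v))
          + sgnk k t v • (if w ∈ t.erase v then (0 : simplicialChains k Δ (m + 1))
              else sgnk k (t.erase v) w • Ech k Δ (m + 1) (insert w (t.erase v)))
          = 0 := by
      intro v hv
      have hwv : w ≠ v := fun h => hw (h ▸ hv)
      rw [if_neg (fun hcc => hw (Finset.mem_of_mem_erase hcc)),
        Finset.erase_insert_of_ne hwv, smul_smul, smul_smul, ← add_smul]
      have hz : sgnk k t w * sgnk k (insert w t) v + sgnk k t v * sgnk k (t.erase v) w = 0 := by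
        rcases hwv.lt_or_gt with h | h
        · rw [sgnk_insert_of_lt k hw h, sgnk_erase_of_not_lt k h.asymm]; ring
        · rw [sgnk_insert_of_not_lt k h.asymm, sgnk_erase_of_lt k hv h]; ring
      rw [hz, zero_smul]
    rw [add_assoc, ← Finset.sum_add_distrib, Finset.sum_congr rfl key,
      Finset.sum_const_zero, add_zero]


lemma bd_bd_all (hdown : ∀ ⦃a b : Finset V⦄, a ⊆ b → Δ b → Δ a) (m : ℕ)
    (y : simplicialChains k Δ (m + 2)) :
    simplicialBoundary k Δ m (simplicialBoundary k Δ (m + 1) y) = 0 := by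
  conv_lhs => rw [chains_decomp k Δ y]
  rw [map_sum, map_sum]
  refine Finset.sum_eq_zero fun u _ => ?_
  rw [map_smul, map_smul, Ech_single k Δ u, bd_bd k Δ hdown m u.1 u.2.1 u.2.2, smul_zero]

lemma homotopy_all (hdown : ∀ ⦃a b : Finset V⦄, a ⊆ b → Δ b → Δ a) (w : V) (m : ℕ)
    (hface : ∀ u : {s : Finset V // Δ s ∧ s.card = m + 1}, ∀ s ⊆ u.1, Δ s → Δ (insert w s))
    (x : simplicialChains k Δ (m + 1)) :
    simplicialBoundary k Δ (m + 1) (hmap k Δ w (m + 1) x)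
      + hmap k Δ w m (simplicialBoundary k Δ m x) = x := by
  have key : ∀ u : {s : Finset V // Δ s ∧ s.card = m + 1},
      simplicialBoundary k Δ (m + 1) (hmap k Δ w (m + 1) (Pi.single u (1 : k)))
        + hmap k Δ w m (simplicialBoundary k Δ m (Pi.single u (1 : k)))
        = Pi.single u (1 : k) := by
    intro u
    rw [Ech_single k Δ u]
    exact homotopy_E k Δ hdown w m u.1 u.2.1 u.2.2 (hface u)
  conv_lhs => rw [chains_decomp k Δ x]
  conv_rhs => rw [chains_decomp k Δ x]
  rw [map_sum, map_sum, map_sum, map_sum, ← Finset.sum_add_distrib]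
  refine Finset.sum_congr rfl fun u _ => ?_
  rw [map_smul, map_smul, map_smul, map_smul, ← smul_add, key u]

end Aux

open scoped Classical

/-- Lemma 2.2, link part: if every color class has at least two elements
and `σ ∈ B_r` is a nonempty face such that every color has a vertex outside `σ`, then the
reduced simplicial homology `H̃_j(link_σ(B_r); k)` vanishes for all `-1 ≤ j < r - |σ|`.
Reduced degree `j` corresponds to chain degree `m = j + 1` of the augmented complex: the
`j = -1` case is the first conjunct, and the case `j = m ≥ 0` is the second conjunct. -/
theorem reduced_homology_link_Br_vanishes {V : Type*} [Fintype V] [LinearOrder V]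
    (k : Type*) [Field k] {r : ℕ} (hr : 1 ≤ r) (col : V → Fin r)
    (hcol : ∀ i : Fin r, 2 ≤ (Finset.univ.filter fun v => col v = i).card)
    (σ : Finset V) (hσ : BrFaces col σ) (hσne : σ.Nonempty)
    (hout : ∀ i : Fin r, ∃ v : V, col v = i ∧ v ∉ σ) :
    ((0 : ℤ) ≤ (r : ℤ) - (σ.card : ℤ) →
      LinearMap.range (simplicialBoundary k (linkFaces (BrFaces col) σ) 0) = ⊤) ∧
    (∀ m : ℕ, (m : ℤ) + 1 ≤ (r : ℤ) - (σ.card : ℤ) →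
      LinearMap.ker (simplicialBoundary k (linkFaces (BrFaces col) σ) m) =
        LinearMap.range (simplicialBoundary k (linkFaces (BrFaces col) σ) (m + 1))) := by

  set Δ : Finset V → Prop := linkFaces (BrFaces col) σ with hΔdef
  haveI : Nonempty (Fin r) := ⟨⟨0, hr⟩⟩
  -- downward closure
  have hBdown : ∀ ⦃a b : Finset V⦄, a ⊆ b → BrFaces col b → BrFaces col a := by
    intro a b hab hb
    refine ⟨le_trans (Finset.card_le_card hab) hb.1, fun h => hb.2 ?_⟩
    exact Finset.univ_subset_iff.1 (h ▸ Finset.image_subset_image hab)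
  have hdown : ∀ ⦃a b : Finset V⦄, a ⊆ b → Δ b → Δ a := by
    intro a b hab hb
    refine ⟨hBdown hab hb.1, hBdown (Finset.union_subset_union hab Finset.Subset.rfl) hb.2.1, ?_⟩
    exact Finset.subset_empty.1 ((Finset.inter_subset_inter hab Finset.Subset.rfl).trans
      (Finset.subset_empty.2 hb.2.2))
  obtain ⟨v₀, hv₀⟩ := hσne
  obtain ⟨w, hwcol, hwσ⟩ := hout (col v₀)
  have hwv₀ : col w = col v₀ := hwcol
  have hcw : col w ∈ σ.image col := hwv₀ ▸ Finset.mem_image_of_mem col hv₀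
  -- the cone property
  have hcone : ∀ γ : Finset V, Δ γ → γ.card + σ.card ≤ r → Δ (insert w γ) := by
    intro γ hγ hcard
    obtain ⟨⟨hγc, hγi⟩, ⟨hγσc, hγσi⟩, hγint⟩ := hγ
    have hσ1 : 1 ≤ σ.card := Finset.card_pos.2 ⟨v₀, hv₀⟩
    have hiu : insert w γ ∪ σ = insert w (γ ∪ σ) := Finset.insert_union w γ σ
    have himg : (insert w (γ ∪ σ)).image col = (γ ∪ σ).image col := by
      rw [Finset.image_insert]
      exact Finset.insert_eq_self.2 (Finset.image_subset_image Finset.subset_union_right hcw)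
    have hBru : BrFaces col (insert w γ ∪ σ) := by
      rw [hiu]
      constructor
      · calc (insert w (γ ∪ σ)).card ≤ (γ ∪ σ).card + 1 := Finset.card_insert_le _ _
          _ ≤ γ.card + σ.card + 1 := by
              have := Finset.card_union_le γ σ; omega
          _ ≤ r + 1 := by omega
      · rw [himg]; exact hγσi
    refine ⟨?_, hBru, ?_⟩
    · refine ⟨?_, fun h => hBru.2 ?_⟩
      · calc (insert w γ).card ≤ γ.card + 1 := Finset.card_insert_le _ _
          _ ≤ r + 1 := by omega
      · exact Finset.univ_subset_iff.1
          (h ▸ Finset.image_subset_image Finset.subset_union_left)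
    · rw [Finset.insert_inter_of_notMem hwσ]
      exact hγint
  -- the empty set is a face
  have hcompl_ne : ∀ {A : Finset (Fin r)}, A ⊆ σ.image col → A ≠ Finset.univ := by
    intro A hsub h
    exact hσ.2 (Finset.univ_subset_iff.1 (h ▸ hsub))
  have hΔempty : Δ ∅ := by
    refine ⟨⟨by simp, ?_⟩, ?_, Finset.empty_inter σ⟩
    · rw [Finset.image_empty]
      intro h
      exact Finset.univ_nonempty.ne_empty h.symm
    · rw [Finset.empty_union]; exact hσ
  constructor
  · -- degree -1 : surjectivity of the last boundary map
    intro h0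
    have hσr : σ.card ≤ r := by omega
    have hΔw : Δ ({w} : Finset V) := by
      refine ⟨⟨by rw [Finset.card_singleton]; omega, ?_⟩, ?_,
        Finset.singleton_inter_of_notMem hwσ⟩
      · rw [Finset.image_singleton]
        exact hcompl_ne (Finset.singleton_subset_iff.2 hcw)
      · rw [← Finset.insert_eq]
        refine ⟨?_, ?_⟩
        · calc (insert w σ).card ≤ σ.card + 1 := Finset.card_insert_le _ _
            _ ≤ r + 1 := by omega
        · rw [Finset.image_insert]
          rw [Finset.insert_eq_self.2 hcw]
          exact hσ.2
    rw [LinearMap.range_eq_top]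
    intro x
    have hu0 : Δ ∅ ∧ (∅ : Finset V).card = 0 := ⟨hΔempty, Finset.card_empty⟩
    set u0 : {s : Finset V // Δ s ∧ s.card = 0} := ⟨∅, hu0⟩ with hu0def
    have hbdw : simplicialBoundary k Δ 0 (Ech k Δ 1 ({w} : Finset V)) = Ech k Δ 0 ∅ := by
      rw [bd_E k Δ hdown 0 {w} hΔw (Finset.card_singleton w), Finset.sum_singleton,
        Finset.erase_singleton]
      have : sgnk k ({w} : Finset V) w = 1 := by
        rw [sgnk, Finset.filter_singleton, if_neg (lt_irrefl w)]
        simp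
      rw [this, one_smul]
    refine ⟨x u0 • Ech k Δ 1 ({w} : Finset V), ?_⟩
    rw [map_smul, hbdw]
    funext u
    have hueq : u = u0 := Subtype.ext (Finset.card_eq_zero.1 u.2.2)
    rw [hueq]
    simp [Ech, u0]
  · -- degrees 0 ≤ j < r - |σ|
    intro m hm
    have hm' : m + 1 + σ.card ≤ r := by omega
    have hface : ∀ u : {s : Finset V // Δ s ∧ s.card = m + 1},
        ∀ s ⊆ u.1, Δ s → Δ (insert w s) := by
      intro u s hsub hs
      have : s.card ≤ m + 1 := u.2.2 ▸ Finset.card_le_card hsub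
      exact hcone s hs (by omega)
    apply Submodule.ext
    intro x
    rw [LinearMap.mem_ker, LinearMap.mem_range]
    constructor
    · intro hx
      refine ⟨hmap k Δ w (m + 1) x, ?_⟩
      have := homotopy_all k Δ hdown w m hface x
      rwa [hx, map_zero, add_zero] at this
    · rintro ⟨y, rfl⟩
      exact bd_bd_all k Δ hdown m y
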